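/- Let m ≥ 2 be an integer and α > 0 a real number. Then p < 0 and p^2 − 4r > 0; in fact one has the identity 16(m+α)^4·(p^2 − 4r) = 3α^4 + 4(3m−5)·α^3 + (274m^2 − 316m + 50)·α^2 + 4(m−1)(3m^2 + 52m + 45)·α + (m−1)^2·(3m^2 − 14m + 19), and the right-hand side is positive. -/
import Mathlib


/-- The coefficient `p` of the depressed quartic. -/
noncomputable def pCoeff (m : ℕ) (α : ℝ) : ℝ :=
  -(1 / (8 * ((m : ℝ) + α) ^ 2)) *
    (3 * (m : ℝ) ^ 2 - 10 * (m : ℝ) + 11 + 3 * α ^ 2 + 2 * (19 * (m : ℝ) - 21) * α)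

/-- The coefficient `q` of the depressed quartic. -/
noncomputable def qCoeff (m : ℕ) (α : ℝ) : ℝ :=
  -(1 / (8 * ((m : ℝ) + α) ^ 3)) *
    (α ^ 3 + α ^ 2 * (11 - 13 * (m : ℝ)) - α * ((m : ℝ) - 1) * (13 * (m : ℝ) + 23)
      + ((m : ℝ) - 3) * ((m : ℝ) - 1) ^ 2)

/-- The coefficient `r` of the depressed quartic. -/
noncomputable def rCoeff (m : ℕ) (α : ℝ) : ℝ :=
  -(1 / (256 * ((m : ℝ) + α) ^ 4)) *
    (3 * α ^ 4 + 172 * α ^ 3 - 1630 * α ^ 2 + 204 * α + 3 * (m : ℝ) ^ 4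
      - 180 * α * (m : ℝ) ^ 3 - 20 * (m : ℝ) ^ 3 - 366 * α ^ 2 * (m : ℝ) ^ 2
      + 1796 * α * (m : ℝ) ^ 2 + 34 * (m : ℝ) ^ 2 - 180 * α ^ 3 * (m : ℝ)
      + 1988 * α ^ 2 * (m : ℝ) - 1788 * α * (m : ℝ) + 12 * (m : ℝ) - 45)

/-- For `m ≥ 2` and `α > 0` one has `p < 0` and `p² − 4r > 0`; in fact
`16(m+α)⁴(p² − 4r)` equals the displayed polynomial, which is positive. -/
theorem p_neg_and_psq_sub_four_r_pos (m : ℕ) (hm : 2 ≤ m) (α : ℝ) (hα : 0 < α) :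
    pCoeff m α < 0 ∧ pCoeff m α ^ 2 - 4 * rCoeff m α > 0 ∧
      16 * ((m : ℝ) + α) ^ 4 * (pCoeff m α ^ 2 - 4 * rCoeff m α) =
        3 * α ^ 4 + 4 * (3 * (m : ℝ) - 5) * α ^ 3
          + (274 * (m : ℝ) ^ 2 - 316 * (m : ℝ) + 50) * α ^ 2
          + 4 * ((m : ℝ) - 1) * (3 * (m : ℝ) ^ 2 + 52 * (m : ℝ) + 45) * α
          + ((m : ℝ) - 1) ^ 2 * (3 * (m : ℝ) ^ 2 - 14 * (m : ℝ) + 19) ∧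
      0 < 3 * α ^ 4 + 4 * (3 * (m : ℝ) - 5) * α ^ 3
          + (274 * (m : ℝ) ^ 2 - 316 * (m : ℝ) + 50) * α ^ 2
          + 4 * ((m : ℝ) - 1) * (3 * (m : ℝ) ^ 2 + 52 * (m : ℝ) + 45) * α
          + ((m : ℝ) - 1) ^ 2 * (3 * (m : ℝ) ^ 2 - 14 * (m : ℝ) + 19) := by

  have hM : (2:ℝ) ≤ (m:ℝ) := by exact_mod_cast hm
  have hs : 0 < (m:ℝ) + α := by linarith
  have h1 : pCoeff m α < 0 := by
    unfold pCoeff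
    have hb : 0 < 3 * (m : ℝ) ^ 2 - 10 * (m : ℝ) + 11 + 3 * α ^ 2 + 2 * (19 * (m : ℝ) - 21) * α := by
      nlinarith [sq_nonneg α, sq_nonneg ((m:ℝ)-2), mul_pos hα (show (0:ℝ) < 19*(m:ℝ)-21 by linarith)]
    have : 0 < 1 / (8 * ((m:ℝ)+α)^2) := by positivity
    nlinarith
  have h3 : 16 * ((m : ℝ) + α) ^ 4 * (pCoeff m α ^ 2 - 4 * rCoeff m α) =
        3 * α ^ 4 + 4 * (3 * (m : ℝ) - 5) * α ^ 3
          + (274 * (m : ℝ) ^ 2 - 316 * (m : ℝ) + 50) * α ^ 2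
          + 4 * ((m : ℝ) - 1) * (3 * (m : ℝ) ^ 2 + 52 * (m : ℝ) + 45) * α
          + ((m : ℝ) - 1) ^ 2 * (3 * (m : ℝ) ^ 2 - 14 * (m : ℝ) + 19) := by
    have hs' : ((m:ℝ)+α) ≠ 0 := ne_of_gt hs
    unfold pCoeff rCoeff
    field_simp
    ring
  have h4 : 0 < 3 * α ^ 4 + 4 * (3 * (m : ℝ) - 5) * α ^ 3
          + (274 * (m : ℝ) ^ 2 - 316 * (m : ℝ) + 50) * α ^ 2
          + 4 * ((m : ℝ) - 1) * (3 * (m : ℝ) ^ 2 + 52 * (m : ℝ) + 45) * α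
          + ((m : ℝ) - 1) ^ 2 * (3 * (m : ℝ) ^ 2 - 14 * (m : ℝ) + 19) := by
    nlinarith [pow_pos hα 4, pow_pos hα 3, pow_pos hα 2, sq_nonneg ((m:ℝ)-2),
      mul_pos (pow_pos hα 3) (show (0:ℝ) < 3*(m:ℝ)-5 by linarith),
      mul_pos (pow_pos hα 2) (show (0:ℝ) < 274*(m:ℝ)^2-316*(m:ℝ)+50 by nlinarith),
      mul_pos hα (show (0:ℝ) < ((m:ℝ)-1)*(3*(m:ℝ)^2+52*(m:ℝ)+45) by nlinarith),
      mul_pos (show (0:ℝ) < ((m:ℝ)-1)^2 by nlinarith) (show (0:ℝ) < 3*(m:ℝ)^2-14*(m:ℝ)+19 by nlinarith [sq_nonneg (3*(m:ℝ)-7)])]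
  have h2 : pCoeff m α ^ 2 - 4 * rCoeff m α > 0 := by
    have h16 : 0 < 16 * ((m:ℝ)+α)^4 := by positivity
    nlinarith [h3, h4]
  exact ⟨h1, h2, h3, h4⟩
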